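/- arXiv:1810.12422 — 11 statements merged into one kernel-verified Lean document; each statement's English description precedes it below -/
import Mathlib

section
/- For any k, n ∈ ℕ with k ≠ n, the function f_k : A^k → {0,1} preserves the relation pair (P_n, Q_n); that is, for any x_1, …, x_k ∈ P_n, the tuple obtained by applying f_k coordinatewise (to the rows of the n×k matrix with columns x_1,…,x_k) lies in Q_n. -/
/-- The minor of `f : A^k → B` along `σ : [k] → [ℓ]`. -/
def Minor {A B : Type*} {k l : ℕ} (f : (Fin k → A) → B) (σ : Fin k → Fin l) :
    (Fin l → A) → B := fun x => f (fun i => x (σ i))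

/-- `f` preserves the relational pair `(P, Q)`. -/
def Preserves {A B : Type*} {k m : ℕ} (f : (Fin k → A) → B)
    (P : Set (Fin m → A)) (Q : Set (Fin m → B)) : Prop :=
  ∀ p : Fin k → (Fin m → A), (∀ j, p j ∈ P) →
    (fun i => f (fun j => p j i)) ∈ Q

/-- `P_n`: tuples with exactly one coordinate equal to `1` and all others `0`. -/
def Prel (A : Type*) [Zero A] [One A] (n : ℕ) : Set (Fin n → A) :=
  {x | ∃ i, x i = 1 ∧ ∀ j, j ≠ i → x j = 0}

/-- `Q_n := {0,1}^n \ {(1,…,1)}`. -/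
def Qrel (B : Type*) [Zero B] [One B] (n : ℕ) : Set (Fin n → B) :=
  {y | (∀ i, y i = 0 ∨ y i = 1) ∧ y ≠ fun _ => 1}

/-- `f_k : A^k → {0,1} ⊆ B`, the indicator function of `P_k`. -/
def fok (A B : Type*) [Zero A] [One A] [DecidableEq A] [Zero B] [One B] (k : ℕ) :
    (Fin k → A) → B :=
  fun x => if (∃ i, x i = 1 ∧ ∀ j, j ≠ i → x j = 0) then 1 else 0

/-- For `k ≠ n`, the function `f_k` preserves the pair `(P_n, Q_n)`. -/
theorem fk_preserves_of_ne (d e : ℕ) (hd : 1 ≤ d) (he : 1 ≤ e)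
    (k n : ℕ) (hkn : k ≠ n) :
    Preserves (fok (Fin (d+1)) (Fin (e+1)) k)
      (Prel (Fin (d+1)) n) (Qrel (Fin (e+1)) n) := by
  have hA : (1 : Fin (d+1)) ≠ 0 := by
    simp [Fin.ext_iff, Fin.val_one', Nat.mod_eq_of_lt (by omega : 1 < d+1)]
  have hB : (1 : Fin (e+1)) ≠ 0 := by
    simp [Fin.ext_iff, Fin.val_one', Nat.mod_eq_of_lt (by omega : 1 < e+1)]
  intro p hp
  refine ⟨fun i => ?_, fun hall => ?_⟩
  · unfold fok
    simp only []
    split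
    · right; rfl
    · left; rfl
  · have hrow : ∀ i : Fin n, ∃ j : Fin k, p j i = 1 ∧ ∀ j', j' ≠ j → p j' i = 0 := by
      intro i
      have h := congrFun hall i
      simp only [fok] at h
      by_contra hc
      rw [if_neg hc] at h
      exact hB h.symm
    choose σ hσ1 hσ2 using hrow
    choose τ hτ1 hτ2 using fun j => hp j
    have left : ∀ i, τ (σ i) = i := by
      intro i
      by_contra hne
      have h0 := hτ2 (σ i) i (fun h => hne h.symm)
      rw [hσ1 i] at h0
      exact hA h0
    have right : ∀ j, σ (τ j) = j := by
      intro j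
      by_contra hne
      have h0 := hσ2 (τ j) j (fun h => hne (h ▸ rfl))
      rw [hτ1 j] at h0
      exact hA h0
    have hcard : n = k := by
      have := Fintype.card_congr (⟨σ, τ, left, right⟩ : Fin n ≃ Fin k)
      simpa using this
    exact hkn hcard.symm
end

section
/- For every k ∈ ℕ, the function f_k does not preserve the relation pair (P_k, Q_k): applying f_k to the k columns of the identity-pattern matrix (whose rows are the standard unit tuples) yields the tuple (1,…,1), which is not in Q_k. -/
/-- `f_k` does not preserve the pair `(P_k, Q_k)`. -/
theorem fk_not_preserves_self (d e : ℕ) (hd : 1 ≤ d) (he : 1 ≤ e) (k : ℕ) :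
    ¬ Preserves (fok (Fin (d+1)) (Fin (e+1)) k)
      (Prel (Fin (d+1)) k) (Qrel (Fin (e+1)) k) := by
  intro h
  have := h (fun j i => if i = j then 1 else 0) (by
    intro j
    refine ⟨j, by simp, ?_⟩
    intro i hij
    simp [hij])
  rcases this with ⟨_, hne⟩
  apply hne
  funext i
  simp only [fok]
  rw [if_pos]
  exact ⟨i, by simp, fun j hj => by simp [hj, Ne.symm hj]⟩
end

section
/- For every k ∈ ℕ, the function e_k : {0,1}^k → {0,1} cannot be written as a sum modulo 2 of finitely many minors of functions e_i with i < k, nor as such a sum plus the constant 1. That is, e_k ≠ c + Σ_{j=1}^{m} e_{i_j}^{σ_j} (mod 2) for any c ∈ {0,1}, m ∈ ℕ, indices i_j < k, and maps σ_j : [i_j] → [k]. -/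
/-- `e_k : {0,1}^k → {0,1}` (values in `ZMod 2`), equal to `1` iff all coordinates are `1`. -/
def ez (k : ℕ) : (Fin k → Bool) → ZMod 2 :=
  fun x => if (∀ i, x i = true) then 1 else 0

lemma sum_ez_self (k : ℕ) : ∑ x : Fin k → Bool, ez k x = 1 := by
  have h : ∀ x : Fin k → Bool, ez k x = if x = (fun _ => true) then 1 else 0 := by
    intro x
    unfold ez
    exact if_congr (by simp [funext_iff]) rfl rfl
  rw [Finset.sum_congr rfl (fun x _ => h x)]
  simp

lemma sum_ez_minor (k n : ℕ) (hn : n < k) (σ : Fin n → Fin k) :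
    ∑ x : Fin k → Bool, ez n (fun t => x (σ t)) = 0 := by
  -- find a coordinate not in the range of σ
  have hcard : (Finset.univ.image σ).card < k := by
    calc (Finset.univ.image σ).card ≤ (Finset.univ : Finset (Fin n)).card :=
          Finset.card_image_le
      _ ≤ n := by simp
      _ < k := hn
  obtain ⟨p, hp⟩ : ∃ p : Fin k, p ∉ Finset.univ.image σ := by
    by_contra hcon
    push_neg at hcon
    have : (Finset.univ : Finset (Fin k)) ⊆ Finset.univ.image σ := fun a _ => hcon a
    have := Finset.card_le_card this
    simp at this
    omega
  have hpne : ∀ t, σ t ≠ p := by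
    intro t ht
    exact hp (Finset.mem_image.mpr ⟨t, Finset.mem_univ t, ht⟩)
  refine Finset.sum_involution (fun x _ => Function.update x p (!x p)) ?_ ?_ ?_ ?_
  · intro x _
    have : (fun t => (Function.update x p (!x p)) (σ t)) = fun t => x (σ t) := by
      funext t
      exact Function.update_of_ne (hpne t) _ _
    rw [this]
    exact CharTwo.add_self_eq_zero _
  · intro x _ _ heq
    have := congrFun heq p
    simp at this
  · intro x _; exact Finset.mem_univ _
  · intro x _
    funext q
    by_cases hq : q = p
    · subst hq; simp
    · simp [Function.update_of_ne hq]

/-- `e_k` is not a sum mod 2 of a constant and finitely many minors of functions `e_i`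
with `i < k`. -/
theorem ek_not_sum_of_minors (k : ℕ) (hk : 1 ≤ k) (c : ZMod 2) (m : ℕ)
    (i : Fin m → ℕ) (hi : ∀ j, i j < k)
    (σ : (j : Fin m) → Fin (i j) → Fin k) :
    (fun x : Fin k → Bool => c + ∑ j, ez (i j) (fun t => x (σ j t))) ≠ ez k := by
  intro h
  have h2 : ∑ x : Fin k → Bool,
      (fun x : Fin k → Bool => c + ∑ j, ez (i j) (fun t => x (σ j t))) x
      = ∑ x : Fin k → Bool, ez k x := by rw [h]
  simp only [] at h2
  rw [sum_ez_self, Finset.sum_add_distrib, Finset.sum_const, Finset.sum_comm] at h2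
  have hz : ∀ j ∈ (Finset.univ : Finset (Fin m)),
      ∑ x : Fin k → Bool, ez (i j) (fun t => x (σ j t)) = 0 :=
    fun j _ => sum_ez_minor k (i j) (hi j) (σ j)
  rw [Finset.sum_congr rfl hz] at h2
  simp at h2
  obtain ⟨h3, -⟩ := h2
  replace h3 := h3.resolve_right (by omega)
  exact one_ne_zero h3.symm
end

section
/- Let A be a finite set. Then the clonoids ⟨e_1⟩, ⟨e_2⟩, ⟨e_3⟩, … generated by the functions e_k with target algebra B = ({0,1}, +, 0, 1) form a strictly increasing infinite chain: ⟨e_1⟩_B ⊊ ⟨e_2⟩_B ⊊ ⟨e_3⟩_B ⊊ …. -/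
/-- A clonoid with source `A` and target algebra `({0,1}, +, 0, 1)`:
closed under minors, pointwise addition mod 2, and containing all constants. -/
def IsClonoidAdd (A : Type*) (C : (n : ℕ) → Set ((Fin n → A) → ZMod 2)) : Prop :=
  (∀ k l (σ : Fin k → Fin l) f, f ∈ C k → Minor f σ ∈ C l) ∧
  (∀ k f g, f ∈ C k → g ∈ C k → (fun x => f x + g x) ∈ C k) ∧
  (∀ k, (fun _ => (0 : ZMod 2)) ∈ C k) ∧
  (∀ k, (fun _ => (1 : ZMod 2)) ∈ C k)

/-- The clonoid with target `({0,1}, +, 0, 1)` generated by the family `F`. -/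
def GenAdd (A : Type*) (F : (n : ℕ) → Set ((Fin n → A) → ZMod 2)) (k : ℕ) :
    Set ((Fin k → A) → ZMod 2) :=
  {f | ∀ C : (n : ℕ) → Set ((Fin n → A) → ZMod 2),
      IsClonoidAdd A C → (∀ n, F n ⊆ C n) → f ∈ C k}

/-- `e_n : A^n → {0,1}`, equal to `1` iff all coordinates equal `1`. -/
def eA (A : Type*) [One A] [DecidableEq A] (n : ℕ) : (Fin n → A) → ZMod 2 :=
  fun x => if (∀ i, x i = 1) then 1 else 0

/-- The family consisting of the single function `e_k` (at arity `k`). -/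
def eFam (A : Type*) [One A] [DecidableEq A] (k : ℕ) :
    (n : ℕ) → Set ((Fin n → A) → ZMod 2) :=
  fun n => if n = k then {eA A n} else ∅

/-! ### Auxiliary machinery -/

/-- The conjunction indicator of the coordinates in `S`. -/
def chiA (A : Type*) [One A] [DecidableEq A] {n : ℕ} (S : Finset (Fin n)) :
    (Fin n → A) → ZMod 2 :=
  fun x => if ∀ i ∈ S, x i = 1 then 1 else 0

/-- The clonoid of "polynomials of degree ≤ k" in the conjunction indicators. -/
def spanC (A : Type*) [One A] [DecidableEq A] (k : ℕ) :
    (n : ℕ) → Set ((Fin n → A) → ZMod 2) :=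
  fun n => {f | ∃ a : Finset (Fin n) → ZMod 2,
    (∀ S, a S ≠ 0 → S.card ≤ k) ∧ ∀ x, f x = ∑ S : Finset (Fin n), a S * chiA A S x}

lemma chiA_comp (A : Type*) [One A] [DecidableEq A] {m l : ℕ} (σ : Fin m → Fin l)
    (S : Finset (Fin m)) (x : Fin l → A) :
    chiA A S (fun i => x (σ i)) = chiA A (S.image σ) x := by
  unfold chiA
  congr 1
  simp only [eq_iff_iff, Finset.mem_image]
  constructor
  · rintro h j ⟨i, hi, rfl⟩; exact h i hi
  · intro h i hi; exact h (σ i) ⟨i, hi, rfl⟩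

lemma spanC_clonoid (A : Type*) [One A] [DecidableEq A] (k : ℕ) :
    IsClonoidAdd A (spanC A k) := by
  refine ⟨?_, ?_, ?_, ?_⟩
  · rintro m l σ f ⟨a, ha, hf⟩
    refine ⟨fun T => ∑ S ∈ Finset.univ.filter (fun S => S.image σ = T), a S, ?_, ?_⟩
    · intro T hT
      obtain ⟨S, hS, haS⟩ := Finset.exists_ne_zero_of_sum_ne_zero hT
      simp only [Finset.mem_filter, Finset.mem_univ, true_and] at hS
      calc T.card = (S.image σ).card := by rw [hS]
        _ ≤ S.card := Finset.card_image_le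
        _ ≤ k := ha S haS
    · intro x
      have : Minor f σ x = ∑ S : Finset (Fin m), a S * chiA A (S.image σ) x := by
        simp only [Minor, hf]
        exact Finset.sum_congr rfl fun S _ => by rw [chiA_comp]
      rw [this,
        ← Finset.sum_fiberwise_of_maps_to (g := fun S : Finset (Fin m) => S.image σ)
          (fun S _ => Finset.mem_univ _) (fun S => a S * chiA A (S.image σ) x)]
      refine Finset.sum_congr rfl fun T _ => ?_
      rw [Finset.sum_mul]
      refine Finset.sum_congr rfl fun S hS => ?_
      simp only [Finset.mem_filter, Finset.mem_univ, true_and] at hS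
      rw [hS]
  · rintro m f g ⟨a, ha, hf⟩ ⟨b, hb, hg⟩
    refine ⟨fun S => a S + b S, ?_, ?_⟩
    · intro S hS
      by_cases h1 : a S ≠ 0
      · exact ha S h1
      · push_neg at h1
        exact hb S (by simpa [h1] using hS)
    · intro x
      simp only [hf, hg, add_mul, Finset.sum_add_distrib]
  · intro m
    exact ⟨fun _ => 0, fun S hS => absurd rfl hS, fun x => by simp⟩
  · intro m
    refine ⟨fun S => if S = ∅ then 1 else 0, ?_, ?_⟩
    · intro S hS
      have : S = ∅ := by by_contra h; simp [h] at hS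
      simp [this, Nat.zero_le]
    · intro x
      rw [Finset.sum_eq_single ∅]
      · simp [chiA]
      · intro S _ hS; simp [hS]
      · simp

lemma eA_eq_chiA_univ (A : Type*) [One A] [DecidableEq A] (n : ℕ) :
    eA A n = chiA A (Finset.univ : Finset (Fin n)) := by
  funext x
  simp [eA, chiA]

lemma eA_mem_spanC (A : Type*) [One A] [DecidableEq A] (k : ℕ) :
    eA A k ∈ spanC A k k := by
  refine ⟨fun S => if S = Finset.univ then 1 else 0, ?_, ?_⟩
  · intro S hS
    have : S = Finset.univ := by by_contra h; simp [h] at hS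
    simp [this]
  · intro x
    rw [Finset.sum_eq_single (Finset.univ : Finset (Fin k))]
    · simp [eA_eq_chiA_univ]
    · intro S _ hS; simp [hS]
    · simp

/-- The key parity functional computation. -/
lemma phi_chiA (A : Type*) [Zero A] [One A] [DecidableEq A] (h01 : (0 : A) ≠ 1)
    {n : ℕ} (S : Finset (Fin n)) :
    (∑ y : Fin n → Bool, chiA A S (fun i => if y i then 1 else 0)) =
      if S = Finset.univ then 1 else 0 := by
  have hval : ∀ y : Fin n → Bool,
      chiA A S (fun i => if y i then (1 : A) else 0) =
        ∏ i : Fin n, (if i ∈ S then (if y i then (1 : ZMod 2) else 0) else 1) := by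
    intro y
    by_cases h : ∀ i ∈ S, y i = true
    · have : ∀ i ∈ S, (if y i then (1 : A) else 0) = 1 := by
        intro i hi; simp [h i hi]
      rw [chiA, if_pos this]
      rw [Finset.prod_eq_one]
      intro i _
      by_cases hiS : i ∈ S
      · simp [hiS, h i hiS]
      · simp [hiS]
    · push_neg at h
      obtain ⟨i, hiS, hyi⟩ := h
      have hyi' : y i = false := by simpa using hyi
      have : ¬ ∀ i ∈ S, (if y i then (1 : A) else 0) = 1 := by
        intro hcon
        have := hcon i hiS
        rw [hyi'] at this
        simp at this
        exact h01 this
      rw [chiA, if_neg this]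
      refine (Finset.prod_eq_zero (Finset.mem_univ i) ?_).symm
      simp [hiS, hyi']
  simp only [hval]
  have hswap := Finset.prod_univ_sum (fun _ : Fin n => (Finset.univ : Finset Bool))
    (fun i b => if i ∈ S then (if b then (1 : ZMod 2) else 0) else 1)
  rw [Fintype.piFinset_univ] at hswap
  rw [← hswap]
  have hfac : ∀ i : Fin n,
      (∑ b : Bool, (if i ∈ S then (if b then (1 : ZMod 2) else 0) else 1)) =
        if i ∈ S then 1 else 0 := by
    intro i
    by_cases hiS : i ∈ S
    · simp only [hiS, if_true, Fintype.sum_bool]; decide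
    · simp only [hiS, if_false, Fintype.sum_bool]; decide
  simp only [hfac]
  by_cases h : S = Finset.univ
  · subst h
    simp
  · rw [if_neg h]
    have : ∃ i : Fin n, i ∉ S := by
      by_contra hc
      push_neg at hc
      exact h (Finset.eq_univ_iff_forall.mpr hc)
    obtain ⟨i, hi⟩ := this
    exact Finset.prod_eq_zero (Finset.mem_univ i) (by simp [hi])

lemma eA_not_mem_spanC (A : Type*) [Zero A] [One A] [DecidableEq A]
    (h01 : (0 : A) ≠ 1) (k : ℕ) :
    eA A (k+1) ∉ spanC A k (k+1) := by
  rintro ⟨a, ha, hf⟩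
  have h1 : (∑ y : Fin (k+1) → Bool, eA A (k+1) (fun i => if y i then 1 else 0)) = 1 := by
    rw [eA_eq_chiA_univ, phi_chiA A h01]
    simp
  have h2 : (∑ y : Fin (k+1) → Bool, eA A (k+1) (fun i => if y i then 1 else 0)) = 0 := by
    simp only [hf]
    rw [Finset.sum_comm]
    have : ∀ S : Finset (Fin (k+1)),
        (∑ y : Fin (k+1) → Bool, a S * chiA A S (fun i => if y i then 1 else 0)) =
          a S * (if S = Finset.univ then 1 else 0) := by
      intro S
      rw [← Finset.mul_sum, phi_chiA A h01]
    simp only [this]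
    rw [Finset.sum_eq_single (Finset.univ : Finset (Fin (k+1)))]
    · have : a Finset.univ = 0 := by
        by_contra hc
        have := ha _ hc
        simp at this
      simp [this]
    · intro S _ hS; simp [hS]
    · simp
  rw [h1] at h2
  exact one_ne_zero h2

lemma eA_minor (A : Type*) [One A] [DecidableEq A] (k : ℕ) (hk : 1 ≤ k) :
    ∃ σ : Fin (k+1) → Fin k, eA A k = Minor (eA A (k+1)) σ := by
  refine ⟨fun i => if h : (i : ℕ) < k then ⟨i, h⟩ else ⟨0, hk⟩, ?_⟩
  funext x
  simp only [Minor, eA]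
  congr 1
  simp only [eq_iff_iff]
  constructor
  · intro h i
    split <;> exact h _
  · intro h j
    have := h (Fin.castSucc j)
    have hj : ((Fin.castSucc j : Fin (k+1)) : ℕ) < k := j.isLt
    rw [dif_pos hj] at this
    simpa using this

/-- Over a finite source `A` containing distinct elements `0` and `1`, the clonoids
`⟨e_1⟩_B ⊊ ⟨e_2⟩_B ⊊ ⋯` with target `B = ({0,1}, +, 0, 1)` form a strictly
increasing infinite chain. -/
theorem gen_ek_strict_chain (A : Type*) [Fintype A] [Zero A] [One A] [DecidableEq A]
    (h01 : (0 : A) ≠ 1) (k : ℕ) (hk : 1 ≤ k) :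
    (∀ n, GenAdd A (eFam A k) n ⊆ GenAdd A (eFam A (k+1)) n) ∧
    ¬ (∀ n, GenAdd A (eFam A (k+1)) n ⊆ GenAdd A (eFam A k) n) := by
  constructor
  · intro n f hf C hC hFC
    refine hf C hC ?_
    intro m
    by_cases hm : m = k
    · subst hm
      intro g hg
      simp only [eFam, if_pos rfl, Set.mem_singleton_iff] at hg
      subst hg
      obtain ⟨σ, hσ⟩ := eA_minor A m hk
      rw [hσ]
      refine hC.1 _ _ σ _ ?_
      exact hFC (m+1) (by simp [eFam])
    · intro g hg
      simp [eFam, hm] at hg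
  · intro hcon
    have h1 : eA A (k+1) ∈ GenAdd A (eFam A (k+1)) (k+1) := by
      intro C hC hFC
      exact hFC (k+1) (by simp [eFam])
    have h2 := hcon (k+1) h1
    have h3 : eA A (k+1) ∈ spanC A k (k+1) := by
      refine h2 (spanC A k) (spanC_clonoid A k) ?_
      intro m
      by_cases hm : m = k
      · subst hm
        intro g hg
        simp only [eFam, if_pos rfl, Set.mem_singleton_iff] at hg
        subst hg
        exact eA_mem_spanC A m
      · intro g hg
        simp [eFam, hm] at hg
    exact eA_not_mem_spanC A h01 k h3
end

section
/- Let A be a finite set with |A| > 1 and B a finite algebra with an NU-term. Then the set of clonoids with source A and target algebra B is finite. -/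
/-- `Cl` is a clone of operations on `B`: it contains all projections and is
closed under superposition. -/
def IsCloneOn (B : Type*) (Cl : (n : ℕ) → Set ((Fin n → B) → B)) : Prop :=
  (∀ n (i : Fin n), (fun x : Fin n → B => x i) ∈ Cl n) ∧
  (∀ m k (φ : (Fin m → B) → B) (g : Fin m → (Fin k → B) → B),
    φ ∈ Cl m → (∀ j, g j ∈ Cl k) →
      (fun x : Fin k → B => φ (fun j => g j x)) ∈ Cl k)

/-- A clonoid with source `A` and target the algebra on `B` whose term operations
form `Cl`: closed under minors, and each arity-part is closed under the operations
in `Cl` applied pointwise (i.e., is a subuniverse of `B^{A^k}`). -/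
def IsClonoid (A B : Type*) (Cl : (n : ℕ) → Set ((Fin n → B) → B))
    (C : (n : ℕ) → Set ((Fin n → A) → B)) : Prop :=
  (∀ k l (σ : Fin k → Fin l) f, f ∈ C k → Minor f σ ∈ C l) ∧
  (∀ k m (φ : (Fin m → B) → B) (g : Fin m → (Fin k → A) → B),
    φ ∈ Cl m → (∀ j, g j ∈ C k) →
      (fun x : Fin k → A => φ (fun j => g j x)) ∈ C k)

/-- `φ` is an `n`-ary near-unanimity operation. -/
def IsNU {B : Type*} (n : ℕ) (φ : (Fin n → B) → B) : Prop :=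
  ∀ x y : B, ∀ i : Fin n, φ (Function.update (fun _ => x) i y) = x

/-- Baker–Pixley style interpolation. -/
lemma interpolation {A B : Type*} [Fintype A] {n k : ℕ}
    (Cl : (m : ℕ) → Set ((Fin m → B) → B))
    (C : (m : ℕ) → Set ((Fin m → A) → B)) (hC : IsClonoid A B Cl C)
    (φ : (Fin n → B) → B) (hφ : φ ∈ Cl n) (hnu : IsNU n φ) (hn : 3 ≤ n)
    (f : (Fin k → A) → B)
    (H : ∀ S : Finset (Fin k → A), S.card ≤ n - 1 → ∃ g ∈ C k, ∀ s ∈ S, g s = f s) :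
    f ∈ C k := by
  classical
  have key : ∀ S : Finset (Fin k → A), ∃ g ∈ C k, ∀ s ∈ S, g s = f s := by
    intro S
    induction S using Finset.strongInduction with
    | _ S ih =>
      by_cases hS : S.card ≤ n - 1
      · exact H S hS
      · push_neg at hS
        have hn' : n ≤ S.card := by omega
        obtain ⟨T, hTS, hTcard⟩ := Finset.exists_subset_card_eq hn'
        let eqv : {x // x ∈ T} ≃ Fin n := T.equivFinOfCardEq hTcard
        let sf : Fin n → (Fin k → A) := fun j => (eqv.symm j : Fin k → A)
        have hsfS : ∀ j, sf j ∈ S := fun j => hTS (eqv.symm j).2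
        have hsf_inj : Function.Injective sf := by
          intro a b hab
          have := Subtype.coe_injective hab
          exact eqv.symm.injective this
        have hg : ∀ j : Fin n, ∃ g ∈ C k, ∀ s ∈ S.erase (sf j), g s = f s :=
          fun j => ih _ (Finset.erase_ssubset (hsfS j))
        choose g hg1 hg2 using hg
        refine ⟨fun x => φ (fun j => g j x), hC.2 k n φ g hφ hg1, ?_⟩
        intro s hs
        show φ (fun j => g j s) = f s
        by_cases hex : ∃ j, sf j = s
        · obtain ⟨j0, hj0⟩ := hex
          have heq : (fun j => g j s) = Function.update (fun _ => f s) j0 (g j0 s) := by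
            funext j
            by_cases hj : j = j0
            · subst hj; simp
            · have hne : s ≠ sf j := fun h => hj (hsf_inj (hj0.trans h)).symm
              rw [Function.update_of_ne hj]
              exact hg2 j s (Finset.mem_erase.2 ⟨hne, hs⟩)
          rw [heq]
          exact hnu (f s) (g j0 s) j0
        · push_neg at hex
          have heq : (fun j => g j s) = (fun _ => f s) := by
            funext j
            exact hg2 j s (Finset.mem_erase.2 ⟨fun h => (hex j) h.symm, hs⟩)
          rw [heq]
          let i0 : Fin n := ⟨0, by omega⟩
          have := hnu (f s) (f s) i0
          rwa [Function.update_eq_self] at this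
  obtain ⟨g, hg, hgs⟩ := key Finset.univ
  have : g = f := funext fun s => hgs s (Finset.mem_univ s)
  exact this ▸ hg

/-- Transfer of membership at positive arities via the `|A|^(n-1)`-ary part. -/
lemma transfer {A B : Type*} [Fintype A] (hA : 1 < Fintype.card A) {n k : ℕ}
    (Cl : (m : ℕ) → Set ((Fin m → B) → B))
    (C D : (m : ℕ) → Set ((Fin m → A) → B))
    (hC : IsClonoid A B Cl C) (hD : IsClonoid A B Cl D)
    (φ : (Fin n → B) → B) (hφ : φ ∈ Cl n) (hnu : IsNU n φ) (hn : 3 ≤ n)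
    (hEq : C (Fintype.card (Fin (n - 1) → A)) = D (Fintype.card (Fin (n - 1) → A)))
    (hk : 0 < k) (f : (Fin k → A) → B) (hf : f ∈ C k) : f ∈ D k := by
  classical
  set N := Fintype.card (Fin (n - 1) → A) with hN
  have hAne : Nonempty A := Fintype.card_pos_iff.mp (by omega)
  obtain ⟨a⟩ := hAne
  apply interpolation Cl D hD φ hφ hnu hn
  intro S hScard
  -- choose a list of ≤ n-1 points covering S
  have hcard : Fintype.card {x // x ∈ S} ≤ Fintype.card (Fin (n - 1)) := by
    simpa using hScard
  obtain ⟨ι⟩ := Function.Embedding.nonempty_of_card_le hcard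
  let x : Fin (n - 1) → (Fin k → A) := fun j =>
    if h : ∃ s : {x // x ∈ S}, ι s = j then (h.choose : Fin k → A) else fun _ => a
  have hx : ∀ s (hs : s ∈ S), x (ι ⟨s, hs⟩) = s := by
    intro s hs
    have h : ∃ t : {x // x ∈ S}, ι t = ι ⟨s, hs⟩ := ⟨⟨s, hs⟩, rfl⟩
    have := ι.injective h.choose_spec
    simp only [x, dif_pos h]
    rw [this]
  let ε : (Fin (n - 1) → A) ≃ Fin N := Fintype.equivFin _
  let col : Fin k → (Fin (n - 1) → A) := fun i j => x j i
  let σ : Fin k → Fin N := fun i => ε (col i)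
  have hmem : Minor f σ ∈ D N := hEq ▸ hC.1 k N σ f hf
  let i0 : Fin k := ⟨0, hk⟩
  let τ : Fin N → Fin k := fun c => if h : ∃ i, σ i = c then h.choose else i0
  refine ⟨Minor (Minor f σ) τ, hD.1 N k τ _ hmem, ?_⟩
  intro s hs
  have hτσ : ∀ i j, x j (τ (σ i)) = x j i := by
    intro i j
    have h : ∃ i', σ i' = σ i := ⟨i, rfl⟩
    have hcs : σ h.choose = σ i := h.choose_spec
    have hcol : col h.choose = col i := ε.injective hcs
    have : τ (σ i) = h.choose := dif_pos h
    rw [this]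
    exact congrFun hcol j
  show f (fun i => s (τ (σ i))) = f s
  obtain ⟨j0, hj0⟩ : ∃ j, x j = s := ⟨ι ⟨s, hs⟩, hx s hs⟩
  congr 1
  funext i
  rw [← hj0]
  exact hτσ i j0

/-- If `A` is finite with `|A| > 1` and `B` is a finite algebra with an NU term,
then there are only finitely many clonoids with source `A` and target `B`. -/
theorem finitely_many_clonoids_of_NU (A B : Type*) [Fintype A] [Fintype B]
    (hA : 1 < Fintype.card A)
    (Cl : (n : ℕ) → Set ((Fin n → B) → B)) (hCl : IsCloneOn B Cl)
    (hNU : ∃ n, 3 ≤ n ∧ ∃ nu ∈ Cl n, IsNU n nu) :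
    {C : (m : ℕ) → Set ((Fin m → A) → B) | IsClonoid A B Cl C}.Finite := by
  classical
  obtain ⟨n, hn3, φ, hφ, hnu⟩ := hNU
  set N := Fintype.card (Fin (n - 1) → A) with hN
  let Φ : ((m : ℕ) → Set ((Fin m → A) → B)) →
      Set ((Fin 0 → A) → B) × Set ((Fin N → A) → B) := fun C => (C 0, C N)
  have hinj : Set.InjOn Φ {C | IsClonoid A B Cl C} := by
    intro C hC D hD hCD
    have h0 : C 0 = D 0 := congrArg Prod.fst hCD
    have hNeq : C N = D N := congrArg Prod.snd hCD
    funext k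
    cases k with
    | zero => exact h0
    | succ k =>
      apply Set.Subset.antisymm
      · intro f hf
        exact transfer hA Cl C D hC hD φ hφ hnu hn3 hNeq (Nat.succ_pos k) f hf
      · intro f hf
        exact transfer hA Cl D C hD hC φ hφ hnu hn3 hNeq.symm (Nat.succ_pos k) f hf
  exact Set.Finite.of_finite_image (Set.toFinite _) hinj
end

section
/- Let A and B be finite sets, let V be a nonempty proper subset of B with 0 ∈ V and 1 ∉ V, and set T_n := B^n \ (B\V)^n. Suppose φ : B^m → B preserves T_n (i.e., if b_1,…,b_m ∈ T_n then the tuple obtained by applying φ coordinatewise lies in T_n). If f_n = φ(f_{k_1}^{σ_1}, …, f_{k_m}^{σ_m}) pointwise, for some k_1,…,k_m with k_i ≠ n for all i and maps σ_i : [k_i] → [n], then a contradiction arises; hence no such representation exists. -/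
/-- `T_n := B^n \ (B\V)^n`: the tuples having at least one coordinate in `V`. -/
def Trel {B : Type*} (V : Set B) (n : ℕ) : Set (Fin n → B) :=
  {b | ∃ i, b i ∈ V}

/-- If `V` is a cube term blocker set (with `0 ∈ V`, `1 ∉ V`), `φ` preserves
`T_n`, and `k_i ≠ n` for all `i`, then `f_n` cannot equal
`φ(f_{k_1}^{σ_1}, …, f_{k_m}^{σ_m})`. -/
theorem no_representation_of_fn (d e : ℕ) (hd : 1 ≤ d) (he : 1 ≤ e)
    (V : Set (Fin (e+1))) (hV0 : (0 : Fin (e+1)) ∈ V) (hV1 : (1 : Fin (e+1)) ∉ V)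
    (n m : ℕ) (φ : (Fin m → Fin (e+1)) → Fin (e+1))
    (hφ : ∀ b : Fin m → (Fin n → Fin (e+1)), (∀ j, b j ∈ Trel V n) →
      (fun i => φ (fun j => b j i)) ∈ Trel V n)
    (k : Fin m → ℕ) (hk : ∀ i, k i ≠ n)
    (σ : (i : Fin m) → Fin (k i) → Fin n)
    (heq : fok (Fin (d+1)) (Fin (e+1)) n =
      fun x => φ (fun i => fok (Fin (d+1)) (Fin (e+1)) (k i) (fun t => x (σ i t)))) :
    False := by
  have hd01 : (1 : Fin (d+1)) ≠ 0 := by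
    simp [Fin.ext_iff, Nat.mod_eq_of_lt (by omega : 1 < d + 1)]
  have he01 : (1 : Fin (e+1)) ≠ 0 := by
    simp [Fin.ext_iff, Nat.mod_eq_of_lt (by omega : 1 < e + 1)]
  -- the basis tuples
  set p : Fin n → Fin n → Fin (d+1) := fun j l => if l = j then 1 else 0 with hp
  have hb : ∀ i : Fin m, ∃ j : Fin n,
      fok (Fin (d+1)) (Fin (e+1)) (k i) (fun t => p j (σ i t)) ∈ V := by
    intro i
    by_contra hcon
    push_neg at hcon
    have hEU : ∀ j : Fin n, ∃! t : Fin (k i), σ i t = j := by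
      intro j
      have h0 := hcon j
      have hcond : ∃ t, p j (σ i t) = 1 ∧ ∀ s, s ≠ t → p j (σ i s) = 0 := by
        by_contra hc
        apply h0
        unfold fok
        rw [if_neg hc]
        exact hV0
      obtain ⟨t, ht1, ht0⟩ := hcond
      refine ⟨t, ?_, ?_⟩
      · by_contra hne
        simp only [hp, if_neg hne] at ht1
        exact hd01 ht1.symm
      · intro s hs
        by_contra hne
        have := ht0 s hne
        have hσ : σ i s = j := hs
        simp only [hp, if_pos hσ] at this
        exact hd01 this
    have hbij : Function.Bijective (σ i) :=
      Function.bijective_iff_existsUnique _ |>.mpr hEU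
    have hcard := Fintype.card_of_bijective hbij
    simp only [Fintype.card_fin] at hcard
    exact hk i hcard
  choose j hj using hb
  obtain ⟨l, hl⟩ := hφ
    (fun i li => fok (Fin (d+1)) (Fin (e+1)) (k i) (fun t => p li (σ i t)))
    (fun i => ⟨j i, hj i⟩)
  have hone : φ (fun i => fok (Fin (d+1)) (Fin (e+1)) (k i) (fun t => p l (σ i t))) = 1 := by
    have hc := congrFun heq (p l)
    rw [← hc]
    unfold fok
    rw [if_pos]
    exact ⟨l, by simp [hp], fun s hs => by simp [hp, hs]⟩
  simp only [hone] at hl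
  exact hV1 hl
end

section
/- Let A be a finite set and B a finite idempotent algebra with |A|, |B| > 1 and no cube term. Then there are continuum many (2^{ℵ₀}) clonoids with source A and target algebra B. -/
/-- The clone `Cl` on `B` has a cube term: for some `k ≥ 1` there is a
`(2^k - 1)`-ary operation `c ∈ Cl` and an enumeration `col` of the columns
`{x,y}^k \ {(x,…,x)}` (encoded by Boolean tuples, `true` meaning `y`) such that
applying `c` to each row of the resulting matrix yields `(x,…,x)`. -/
def HasCubeTerm (B : Type*) (Cl : (n : ℕ) → Set ((Fin n → B) → B)) : Prop :=
  ∃ k, 1 ≤ k ∧ ∃ c ∈ Cl (2 ^ k - 1), ∃ col : Fin (2 ^ k - 1) → (Fin k → Bool),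
    (∀ s : Fin k → Bool, s ≠ (fun _ => false) → ∃ j, col j = s) ∧
    (∀ j, col j ≠ (fun _ => false)) ∧
    (∀ x y : B, ∀ i : Fin k, c (fun j => if col j i then y else x) = x)

namespace CMC

variable {B : Type*}

/-- The value of `φ` on the pattern that is `y` on `S` and `x` elsewhere. -/
def veval {m : ℕ} (φ : (Fin m → B) → B) (S : Fin m → Bool) (x y : B) : B :=
  φ (fun i => if S i then y else x)

/-- `φ` covers the set of pairs `Q`: every coordinate is in some set `S`
such that the `S`-pattern evaluates to `x` for every pair `(x,y) ∈ Q`. -/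
def Covers {m : ℕ} (φ : (Fin m → B) → B) (Q : Set (B × B)) : Prop :=
  ∀ j : Fin m, ∃ S : Fin m → Bool, S j = true ∧ ∀ p ∈ Q, veval φ S p.1 p.2 = p.1

def CoverableP (Cl : (n : ℕ) → Set ((Fin n → B) → B)) (Q : Set (B × B)) : Prop :=
  ∃ m, ∃ φ ∈ Cl m, Covers φ Q

section Clone
variable {Cl : (n : ℕ) → Set ((Fin n → B) → B)}

theorem minor_mem (hCl : IsCloneOn B Cl) {k l : ℕ} {f : (Fin k → B) → B}
    (hf : f ∈ Cl k) (σ : Fin k → Fin l) :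
    (fun x : Fin l → B => f (fun i => x (σ i))) ∈ Cl l :=
  hCl.2 k l f (fun j => fun x => x (σ j)) hf (fun j => hCl.1 l (σ j))

/-- Full superposition of `θ` with `M`-ary `Θ` on disjoint variable blocks. -/
def compOp {m M : ℕ} (θ : (Fin m → B) → B) (Θ : (Fin M → B) → B) :
    (Fin (m * M) → B) → B :=
  fun z => θ (fun t => Θ (fun i => z (finProdFinEquiv (t, i))))

theorem comp_mem (hCl : IsCloneOn B Cl) {m M : ℕ} {θ : (Fin m → B) → B}
    {Θ : (Fin M → B) → B} (hθ : θ ∈ Cl m) (hΘ : Θ ∈ Cl M) :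
    compOp θ Θ ∈ Cl (m * M) :=
  hCl.2 m (m * M) θ (fun t => fun z => Θ (fun i => z (finProdFinEquiv (t, i)))) hθ
    (fun t => minor_mem hCl hΘ (fun i => finProdFinEquiv (t, i)))

theorem comp_veval_freeze
    (hidem : ∀ n (φ : (Fin n → B) → B), φ ∈ Cl n → ∀ b, φ (fun _ => b) = b)
    {m M : ℕ} {θ : (Fin m → B) → B} {Θ : (Fin M → B) → B}
    (hθ : θ ∈ Cl m) (S : Fin M → Bool) (x y : B) :
    veval (compOp θ Θ) (fun z => S (finProdFinEquiv.symm z).2) x y = veval Θ S x y := by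
  unfold veval compOp
  have h1 : ∀ t : Fin m,
      Θ (fun i => if S (finProdFinEquiv.symm (finProdFinEquiv (t, i))).2 then y else x)
        = Θ (fun i => if S i then y else x) := by
    intro t; congr 1; funext i; rw [Equiv.symm_apply_apply]
  calc θ (fun t => Θ (fun i => if S (finProdFinEquiv.symm (finProdFinEquiv (t, i))).2 then y else x))
      = θ (fun t => Θ (fun i => if S i then y else x)) := by
        congr 1; funext t; exact h1 t
    _ = Θ (fun i => if S i then y else x) := hidem m θ hθ _

theorem comp_veval_act
    (hidem : ∀ n (φ : (Fin n → B) → B), φ ∈ Cl n → ∀ b, φ (fun _ => b) = b)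
    {m M : ℕ} {θ : (Fin m → B) → B} {Θ : (Fin M → B) → B}
    (hΘ : Θ ∈ Cl M) (T : Fin m → Bool) (S : Fin M → Bool) (x y : B) :
    veval (compOp θ Θ)
      (fun z => T (finProdFinEquiv.symm z).1 && S (finProdFinEquiv.symm z).2) x y
      = θ (fun t => if T t then veval Θ S x y else x) := by
  unfold veval compOp
  congr 1; funext t
  have h1 : ∀ i : Fin M,
      (T (finProdFinEquiv.symm (finProdFinEquiv (t, i))).1 &&
        S (finProdFinEquiv.symm (finProdFinEquiv (t, i))).2) = (T t && S i) := by
    intro i; rw [Equiv.symm_apply_apply]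
  have h2 : Θ (fun i => if (T (finProdFinEquiv.symm (finProdFinEquiv (t, i))).1 &&
        S (finProdFinEquiv.symm (finProdFinEquiv (t, i))).2) then y else x)
      = Θ (fun i => if (T t && S i) then y else x) := by
    congr 1; funext i; rw [h1 i]
  rw [h2]
  cases hT : T t with
  | true => simp
  | false => simp only [Bool.false_and, if_neg Bool.false_ne_true]
             exact hidem M Θ hΘ x


theorem add_pair (hCl : IsCloneOn B Cl)
    (hidem : ∀ n (φ : (Fin n → B) → B), φ ∈ Cl n → ∀ b, φ (fun _ => b) = b)
    (hall : ∀ p : B × B, CoverableP Cl {p}) (Q : Set (B × B)) (q : B × B) :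
    ∀ (D : List B) (M : ℕ) (Θ : (Fin M → B) → B), Θ ∈ Cl M →
      (∀ j : Fin M, ∃ S : Fin M → Bool, S j = true ∧
        (∀ p ∈ Q, veval Θ S p.1 p.2 = p.1) ∧
        (veval Θ S q.1 q.2 = q.1 ∨ veval Θ S q.1 q.2 ∈ D)) →
      ∃ M', ∃ Θ' ∈ Cl M', Covers Θ' (insert q Q) := by
  intro D
  induction D with
  | nil =>
    intro M Θ hΘ hX
    refine ⟨M, Θ, hΘ, ?_⟩
    intro j
    obtain ⟨S, h1, h2, h3⟩ := hX j
    refine ⟨S, h1, fun p hp => ?_⟩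
    rcases Set.mem_insert_iff.mp hp with rfl | hp
    · rcases h3 with h3 | h3
      · exact h3
      · simp at h3
    · exact h2 p hp
  | cons β D ih =>
    intro M Θ hΘ hX
    obtain ⟨mθ, θ, hθ, hcov⟩ := hall (q.1, β)
    refine ih (mθ * M) (compOp θ Θ) (comp_mem hCl hθ hΘ) ?_
    intro j'
    obtain ⟨S, hSi, hSQ, hSq⟩ := hX (finProdFinEquiv.symm j').2
    by_cases hq1 : veval Θ S q.1 q.2 = q.1
    · -- freeze
      refine ⟨fun z => S (finProdFinEquiv.symm z).2, hSi, ?_, ?_⟩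
      · intro p hp
        rw [comp_veval_freeze hidem hθ S p.1 p.2]
        exact hSQ p hp
      · left
        rw [comp_veval_freeze hidem hθ S q.1 q.2]
        exact hq1
    · have hmem : veval Θ S q.1 q.2 ∈ β :: D := hSq.resolve_left hq1
      by_cases hqβ : veval Θ S q.1 q.2 = β
      · -- activate
        obtain ⟨T, hTt, hTgood⟩ := hcov (finProdFinEquiv.symm j').1
        refine ⟨fun z => T (finProdFinEquiv.symm z).1 && S (finProdFinEquiv.symm z).2,
          ?_, ?_, ?_⟩
        · show (T (finProdFinEquiv.symm j').1 && S (finProdFinEquiv.symm j').2) = true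
          rw [hTt, hSi]; rfl
        · intro p hp
          rw [comp_veval_act hidem hΘ T S p.1 p.2, hSQ p hp]
          simp only [ite_self]
          exact hidem mθ θ hθ p.1
        · left
          rw [comp_veval_act hidem hΘ T S q.1 q.2, hqβ]
          exact hTgood (q.1, β) rfl
      · -- freeze, value stays in D
        have hD : veval Θ S q.1 q.2 ∈ D := by
          rcases List.mem_cons.mp hmem with h | h
          · exact absurd h hqβ
          · exact h
        refine ⟨fun z => S (finProdFinEquiv.symm z).2, hSi, ?_, ?_⟩
        · intro p hp
          rw [comp_veval_freeze hidem hθ S p.1 p.2]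
          exact hSQ p hp
        · right
          rw [comp_veval_freeze hidem hθ S q.1 q.2]
          exact hD

theorem coverable_list (hCl : IsCloneOn B Cl) [Fintype B]
    (hidem : ∀ n (φ : (Fin n → B) → B), φ ∈ Cl n → ∀ b, φ (fun _ => b) = b)
    (hall : ∀ p : B × B, CoverableP Cl {p}) :
    ∀ L : List (B × B), ∃ m, ∃ φ ∈ Cl m, Covers φ {p | p ∈ L} := by
  intro L
  induction L with
  | nil =>
    refine ⟨1, fun v => v 0, hCl.1 1 0, ?_⟩
    intro j
    exact ⟨fun _ => true, rfl, fun p hp => absurd hp (by simp)⟩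
  | cons q L ih =>
    obtain ⟨M, Θ, hΘ, hc⟩ := ih
    have hres := add_pair hCl hidem hall {p | p ∈ L} q
      ((Finset.univ : Finset B).toList) M Θ hΘ ?_
    · obtain ⟨M', Θ', hΘ', hc'⟩ := hres
      refine ⟨M', Θ', hΘ', ?_⟩
      have : (insert q {p | p ∈ L} : Set (B × B)) = {p | p ∈ q :: L} := by
        ext p; simp [List.mem_cons, Set.mem_insert_iff]
      rwa [this] at hc'
    · intro j
      obtain ⟨S, h1, h2⟩ := hc j
      exact ⟨S, h1, h2, Or.inr (by simp [Finset.mem_toList])⟩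

theorem cl0_empty [Fintype B] (hB : 1 < Fintype.card B)
    (hidem : ∀ n (φ : (Fin n → B) → B), φ ∈ Cl n → ∀ b, φ (fun _ => b) = b)
    {φ : (Fin 0 → B) → B} (hφ : φ ∈ Cl 0) : False := by
  obtain ⟨b, b', hbb⟩ := Fintype.exists_pair_of_one_lt_card hB
  have h1 := hidem 0 φ hφ b
  have h2 := hidem 0 φ hφ b'
  have he : (fun _ : Fin 0 => b) = (fun _ : Fin 0 => b') := funext (fun i => i.elim0)
  rw [he] at h1
  exact hbb (h1.symm.trans h2)

theorem cube_of_univ [Fintype B] (hCl : IsCloneOn B Cl) (hB : 1 < Fintype.card B)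
    (hidem : ∀ n (φ : (Fin n → B) → B), φ ∈ Cl n → ∀ b, φ (fun _ => b) = b)
    {m : ℕ} {φ : (Fin m → B) → B} (hφ : φ ∈ Cl m)
    (hc : Covers φ (Set.univ : Set (B × B))) : HasCubeTerm B Cl := by
  classical
  have hm : m ≠ 0 := by
    rintro rfl
    exact cl0_empty hB hidem hφ
  choose T hTj hTgood using hc
  have hnz : ∀ t : Fin m, ¬ (fun i => T i t) = (fun _ : Fin m => false) := by
    intro t hcon
    have := congrFun hcon t
    rw [hTj t] at this
    exact Bool.noConfusion this
  have hcard : Fintype.card {s : Fin m → Bool // ¬ s = (fun _ => false)} = 2 ^ m - 1 := by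
    rw [Fintype.card_subtype_compl, Fintype.card_subtype_eq]
    simp [Fintype.card_fun]
  let E := Fintype.equivFinOfCardEq hcard
  refine ⟨m, Nat.one_le_iff_ne_zero.mpr hm,
    fun w => φ (fun t => w (E ⟨fun i => T i t, hnz t⟩)),
    minor_mem hCl hφ (fun t => E ⟨fun i => T i t, hnz t⟩),
    fun j => (E.symm j).1, ?_, ?_, ?_⟩
  · intro s hs
    exact ⟨E ⟨s, hs⟩, by simp⟩
  · intro j
    exact (E.symm j).2
  · intro x y i
    have h1 : ∀ t : Fin m, ((E.symm (E ⟨fun i => T i t, hnz t⟩)).1 : Fin m → Bool) i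
        = T i t := by
      intro t; rw [Equiv.symm_apply_apply]
    have h2 : φ (fun t => if ((E.symm (E ⟨fun i => T i t, hnz t⟩)).1 : Fin m → Bool) i
        then y else x) = φ (fun t => if T i t then y else x) := by
      congr 1; funext t; rw [h1 t]
    show φ (fun t => if ((E.symm (E ⟨fun i => T i t, hnz t⟩)).1 : Fin m → Bool) i
        then y else x) = x
    exact h2.trans (hTgood i (x, y) (Set.mem_univ _))


theorem exists_uncoverable [Fintype B] (hCl : IsCloneOn B Cl) (hB : 1 < Fintype.card B)
    (hidem : ∀ n (φ : (Fin n → B) → B), φ ∈ Cl n → ∀ b, φ (fun _ => b) = b)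
    (hnc : ¬ HasCubeTerm B Cl) :
    ∃ d c : B, d ≠ c ∧ ¬ CoverableP Cl {(d, c)} := by
  by_contra h
  push_neg at h
  have hall : ∀ p : B × B, CoverableP Cl {p} := by
    rintro ⟨x, y⟩
    by_cases hxy : x = y
    · subst hxy
      refine ⟨1, fun v => v 0, hCl.1 1 0, ?_⟩
      intro j
      refine ⟨fun _ => true, rfl, ?_⟩
      rintro p hp
      rw [Set.mem_singleton_iff] at hp
      subst hp
      simp [veval]
    · exact h x y hxy
  classical
  obtain ⟨m, φ, hφ, hcov⟩ :=
    coverable_list hCl hidem hall (Finset.univ : Finset (B × B)).toList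
  have hcu : Covers φ (Set.univ : Set (B × B)) := by
    intro j
    obtain ⟨S, h1, h2⟩ := hcov j
    exact ⟨S, h1, fun p _ => h2 p (by simp [Finset.mem_toList])⟩
  exact hnc (cube_of_univ hCl hB hidem hφ hcu)

end Clone

section Count
variable {A : Type*} {Cl : (n : ℕ) → Set ((Fin n → B) → B)}

def unitv (a0 a1 : A) {k : ℕ} (j : Fin k) : Fin k → A := fun i => if i = j then a1 else a0

open Classical in
noncomputable def fU (a0 a1 : A) (c d : B) (k : ℕ) : (Fin k → A) → B :=
  fun w => if ∃ j : Fin k, w = unitv a0 a1 j then d else c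

/-- Pointwise `Cl`-closure of a set of `B`-valued functions. -/
def SgC (Cl : (n : ℕ) → Set ((Fin n → B) → B)) {X : Type*} (G : Set (X → B)) :
    Set (X → B) :=
  {h | ∃ r, ∃ φ ∈ Cl r, ∃ gen : Fin r → X → B,
    (∀ t, gen t ∈ G) ∧ h = fun x => φ (fun t => gen t x)}

theorem SgC_gen (hCl : IsCloneOn B Cl) {X : Type*} {G : Set (X → B)} {g : X → B}
    (hg : g ∈ G) : g ∈ SgC Cl G :=
  ⟨1, fun v => v 0, hCl.1 1 0, fun _ => g, fun _ => hg, rfl⟩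

theorem SgC_superpos (hCl : IsCloneOn B Cl) {X : Type*} {G : Set (X → B)} {m' : ℕ}
    {φ' : (Fin m' → B) → B} (hφ' : φ' ∈ Cl m') (h : Fin m' → X → B)
    (hh : ∀ j, h j ∈ SgC Cl G) :
    (fun x => φ' (fun j => h j x)) ∈ SgC Cl G := by
  classical
  choose r ψ hψ gen hgen heq using hh
  let e : (Σ j : Fin m', Fin (r j)) ≃ Fin (∑ j, r j) :=
    Fintype.equivFinOfCardEq (by simp [Fintype.card_sigma])
  refine ⟨∑ j, r j, fun z => φ' (fun j => ψ j (fun t => z (e ⟨j, t⟩))), ?_,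
    fun s => (fun p : Σ j : Fin m', Fin (r j) => gen p.1 p.2) (e.symm s), ?_, ?_⟩
  · exact hCl.2 m' _ φ' _ hφ' (fun j => minor_mem hCl (hψ j) (fun t => e ⟨j, t⟩))
  · intro s; exact hgen _ _
  · funext x
    have h1 : ∀ j, h j x = ψ j (fun t => gen j t x) := fun j => congrFun (heq j) x
    have h2 : ∀ (j) (t : Fin (r j)),
        (fun p : Σ j : Fin m', Fin (r j) => gen p.1 p.2) (e.symm (e ⟨j, t⟩)) = gen j t := by
      intro j t; rw [Equiv.symm_apply_apply]
    congr 1; funext j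
    rw [h1 j]; congr 1; funext t
    show gen j t x
        = (fun p : Σ j : Fin m', Fin (r j) => gen p.1 p.2) (e.symm (e ⟨j, t⟩)) x
    rw [h2 j t]

def GU (a0 a1 : A) (c d : B) (U : Set ℕ) (m : ℕ) : Set ((Fin m → A) → B) :=
  {g | ∃ k ∈ U, ∃ σ : Fin k → Fin m, g = fun x => fU a0 a1 c d k (fun i => x (σ i))}

def CU (Cl : (n : ℕ) → Set ((Fin n → B) → B)) (a0 a1 : A) (c d : B) (U : Set ℕ) :
    (m : ℕ) → Set ((Fin m → A) → B) :=
  fun m => SgC Cl (GU a0 a1 c d U m)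

theorem CU_clonoid (hCl : IsCloneOn B Cl) (a0 a1 : A) (c d : B) (U : Set ℕ) :
    IsClonoid A B Cl (CU Cl a0 a1 c d U) := by
  constructor
  · rintro k l σ f ⟨r, φ, hφ, gen, hgen, rfl⟩
    refine ⟨r, φ, hφ, fun t => fun x => gen t (fun i => x (σ i)), ?_, rfl⟩
    intro t
    obtain ⟨k0, hk0, σ0, hg⟩ := hgen t
    refine ⟨k0, hk0, fun i => σ (σ0 i), ?_⟩
    show (fun x : Fin l → A => gen t (fun i => x (σ i)))
        = fun x : Fin l → A => fU a0 a1 c d k0 fun i => x (σ (σ0 i))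
    rw [hg]
  · intro k m φ g hφ hg
    exact SgC_superpos hCl hφ g hg

def GenSet (c d : B) (n : ℕ) : Set (Fin n → B) :=
  {w | (∀ j, w j = c ∨ w j = d) ∧ ∃ j, w j = c}

def DN (Cl : (n : ℕ) → Set ((Fin n → B) → B)) (a0 a1 : A) (c d : B) (n : ℕ) :
    (m : ℕ) → Set ((Fin m → A) → B) :=
  fun m => {g | ∀ σ : Fin m → Fin n,
    (fun j => g (fun i => if σ i = j then a1 else a0)) ∈ SgC Cl (GenSet c d n)}

theorem DN_clonoid (hCl : IsCloneOn B Cl) (a0 a1 : A) (c d : B) (n : ℕ) :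
    IsClonoid A B Cl (DN Cl a0 a1 c d n) := by
  constructor
  · intro k l σm f hf σ
    exact hf (fun i => σ (σm i))
  · intro k m φ g hφ hg σ
    exact SgC_superpos hCl hφ
      (fun t => fun j => g t (fun i => if σ i = j then a1 else a0)) (fun t => hg t σ)

theorem not_unitv {a0 a1 : A} (ha : a0 ≠ a1) {k n : ℕ} (hkn : k ≠ n) (τ : Fin k → Fin n) :
    ∃ j : Fin n, ∀ j0 : Fin k, (fun i => if τ i = j then a1 else a0) ≠ unitv a0 a1 j0 := by
  by_contra hcon
  push_neg at hcon
  have hbij : Function.Bijective τ := by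
    rw [Function.bijective_iff_existsUnique]
    intro j
    obtain ⟨j0, hj0⟩ := hcon j
    have hpt : ∀ i, (τ i = j ↔ i = j0) := by
      intro i
      have hfi := congrFun hj0 i
      unfold unitv at hfi
      constructor
      · intro h1
        by_contra h2
        rw [if_pos h1, if_neg h2] at hfi
        exact ha hfi.symm
      · intro h2
        by_contra h1
        rw [if_neg h1, if_pos h2] at hfi
        exact ha hfi
    exact ⟨j0, (hpt j0).mpr rfl, fun i hi => (hpt i).mp hi⟩
  have hcard := Fintype.card_of_bijective hbij
  simp at hcard
  exact hkn hcard

theorem CU_sub_DN (hCl : IsCloneOn B Cl) {a0 a1 : A} (ha : a0 ≠ a1) (c d : B)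
    {U : Set ℕ} {n : ℕ} (hn : n ∉ U) (m : ℕ) :
    CU Cl a0 a1 c d U m ⊆ DN Cl a0 a1 c d n m := by
  rintro g ⟨r, φ, hφ, gen, hgen, rfl⟩ σ
  refine ⟨r, φ, hφ, fun t => fun j => gen t (fun i => if σ i = j then a1 else a0), ?_, rfl⟩
  intro t
  obtain ⟨k0, hk0, σ0, hg⟩ := hgen t
  have hkn : k0 ≠ n := fun h => hn (h ▸ hk0)
  obtain ⟨j, hj⟩ := not_unitv ha hkn (fun i => σ (σ0 i))
  have hcol : ∀ j' : Fin n,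
      gen t (fun i => if σ i = j' then a1 else a0)
        = fU a0 a1 c d k0 (fun i => if σ (σ0 i) = j' then a1 else a0) := by
    intro j'
    rw [hg]
  constructor
  · intro j'
    show gen t (fun i => if σ i = j' then a1 else a0) = c ∨
      gen t (fun i => if σ i = j' then a1 else a0) = d
    rw [hcol j']
    by_cases hx : ∃ j0, (fun i => if σ (σ0 i) = j' then a1 else a0) = unitv a0 a1 j0
    · right; exact if_pos hx
    · left; exact if_neg hx
  · refine ⟨j, ?_⟩
    show gen t (fun i => if σ i = j then a1 else a0) = c
    rw [hcol j]
    exact if_neg (fun hex => by obtain ⟨j0, hh⟩ := hex; exact hj j0 hh)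

theorem fU_mem_CU (hCl : IsCloneOn B Cl) (a0 a1 : A) (c d : B) {U : Set ℕ} {n : ℕ}
    (hn : n ∈ U) : fU a0 a1 c d n ∈ CU Cl a0 a1 c d U n :=
  SgC_gen hCl ⟨n, hn, fun i => i, rfl⟩

theorem fU_not_DN {a0 a1 : A} {c d : B} (hdc : d ≠ c)
    (hunc : ¬ CoverableP Cl {(d, c)}) (n : ℕ) :
    fU a0 a1 c d n ∉ DN Cl a0 a1 c d n n := by
  classical
  intro hmem
  obtain ⟨r, φ, hφ, gen, hgen, heq⟩ := hmem (fun j => j)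
  have hd : ∀ j : Fin n, φ (fun t => gen t j) = d := by
    intro j
    have h1 : fU a0 a1 c d n (fun i => if i = j then a1 else a0)
        = φ (fun t => gen t j) := congrFun heq j
    have h2 : fU a0 a1 c d n (fun i => if i = j then a1 else a0) = d := by
      exact if_pos ⟨j, rfl⟩
    rw [h2] at h1
    exact h1.symm
  apply hunc
  choose jc hjc using fun t => (hgen t).2
  refine ⟨r, φ, hφ, ?_⟩
  intro t
  refine ⟨fun t' => decide (gen t' (jc t) = c), by simp [hjc t], ?_⟩
  rintro p hp
  rw [Set.mem_singleton_iff] at hp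
  subst hp
  show veval φ (fun t' => decide (gen t' (jc t) = c)) d c = d
  unfold veval
  have hfun : (fun t' => if decide (gen t' (jc t) = c) then c else d)
      = fun t' => gen t' (jc t) := by
    funext t'
    rcases (hgen t').1 (jc t) with h | h
    · rw [h]; simp
    · rw [h]; simp [hdc]
  rw [hfun]
  exact hd (jc t)

theorem mem_CU_iff (hCl : IsCloneOn B Cl) {a0 a1 : A} (ha : a0 ≠ a1) {c d : B}
    (hdc : d ≠ c) (hunc : ¬ CoverableP Cl {(d, c)}) (U : Set ℕ) (n : ℕ) :
    fU a0 a1 c d n ∈ CU Cl a0 a1 c d U n ↔ n ∈ U := by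
  constructor
  · intro hmem
    by_contra hn
    exact fU_not_DN hdc hunc n (CU_sub_DN hCl ha c d hn n hmem)
  · exact fun hn => fU_mem_CU hCl a0 a1 c d hn

end Count
end CMC

/-- If `A` is finite with `|A| > 1` and `B` is a finite idempotent algebra with
`|B| > 1` and no cube term, then there are continuum many clonoids with source
`A` and target `B`. -/
theorem continuum_many_clonoids_idempotent_no_cube (A B : Type*)
    [Fintype A] [Fintype B] (hA : 1 < Fintype.card A) (hB : 1 < Fintype.card B)
    (Cl : (n : ℕ) → Set ((Fin n → B) → B)) (hCl : IsCloneOn B Cl)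
    (hidem : ∀ n (φ : (Fin n → B) → B), φ ∈ Cl n → ∀ b, φ (fun _ => b) = b)
    (hnc : ¬ HasCubeTerm B Cl) :
    Cardinal.mk {C : (m : ℕ) → Set ((Fin m → A) → B) // IsClonoid A B Cl C} =
      Cardinal.continuum := by
  classical
  obtain ⟨a0, a1, ha⟩ := Fintype.exists_pair_of_one_lt_card hA
  obtain ⟨d, c, hdc, hunc⟩ := CMC.exists_uncoverable hCl hB hidem hnc
  have hpow : Cardinal.continuum ^ Cardinal.aleph0 = Cardinal.continuum := by
    rw [← Cardinal.two_power_aleph0, ← Cardinal.power_mul, Cardinal.aleph0_mul_aleph0]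
  apply le_antisymm
  · -- upper bound
    have h2 : Cardinal.mk {C : (m : ℕ) → Set ((Fin m → A) → B) // IsClonoid A B Cl C}
        ≤ Cardinal.mk ((m : ℕ) → Set ((Fin m → A) → B)) := Cardinal.mk_subtype_le _
    refine h2.trans ?_
    rw [Cardinal.mk_pi]
    refine (Cardinal.prod_le_prod _ (fun _ => Cardinal.continuum) ?_).trans ?_
    · intro m
      exact ((Cardinal.lt_aleph0_of_finite _).le).trans Cardinal.aleph0_le_continuum
    · rw [Cardinal.prod_const, Cardinal.lift_continuum, Cardinal.mk_nat,
        Cardinal.lift_aleph0, hpow]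
  · -- lower bound
    have hinj : Function.Injective
        (fun U : ULift.{_} (Set ℕ) =>
          (⟨CMC.CU Cl a0 a1 c d U.down, CMC.CU_clonoid hCl a0 a1 c d U.down⟩ :
            {C : (m : ℕ) → Set ((Fin m → A) → B) // IsClonoid A B Cl C})) := by
      intro U V h
      have hCUV : CMC.CU Cl a0 a1 c d U.down = CMC.CU Cl a0 a1 c d V.down :=
        congrArg Subtype.val h
      have hUV : U.down = V.down := by
        ext n
        rw [← CMC.mem_CU_iff hCl ha hdc hunc U.down n,
          ← CMC.mem_CU_iff hCl ha hdc hunc V.down n, hCUV]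
      cases U; cases V; simpa using hUV
    have hle := Cardinal.mk_le_of_injective hinj
    rwa [Cardinal.mk_uLift, Cardinal.mk_set, Cardinal.mk_nat, Cardinal.two_power_aleph0,
      Cardinal.lift_continuum] at hle
end

section
/- For any U ⊆ ℕ, every function in the clonoid generated by F_U (with target the bare set {0,1}, i.e., the closure of F_U under minors) preserves all relation pairs (P_n, Q_n) with n ∉ U. -/
/-- `Q_n := {0,1}^n \ {(1,…,1)}`, with `{0,1}` rendered as `Bool`. -/
def QrelB (n : ℕ) : Set (Fin n → Bool) :=
  {y | y ≠ fun _ => true}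

/-- `f_k : A^k → {0,1}`, the indicator function of `P_k`, with values in `Bool`. -/
def fkB (A : Type*) [Zero A] [One A] [DecidableEq A] (k : ℕ) : (Fin k → A) → Bool :=
  fun x => decide (∃ i, x i = 1 ∧ ∀ j, j ≠ i → x j = 0)

/-- The family `F_U = {f_k : k ∈ U}` (at arity `n` it contains `f_n` iff `n ∈ U`). -/
def FUfam (A : Type*) [Zero A] [One A] [DecidableEq A] (U : Set ℕ) :
    (n : ℕ) → Set ((Fin n → A) → Bool) :=
  fun n => {g | n ∈ U ∧ g = fkB A n}

/-- The minor-closure of a family `F` (the clonoid generated by `F` with target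
the bare set `{0,1}`). -/
def MinorClosure {A B : Type*} (F : (n : ℕ) → Set ((Fin n → A) → B)) (k : ℕ) :
    Set ((Fin k → A) → B) :=
  {f | ∀ C : (n : ℕ) → Set ((Fin n → A) → B),
      (∀ a b (σ : Fin a → Fin b) g, g ∈ C a → Minor g σ ∈ C b) →
      (∀ n, F n ⊆ C n) → f ∈ C k}

lemma fkB_preserves {d : ℕ} (hd : 1 ≤ d) {k n : ℕ} (hkn : k ≠ n) :
    Preserves (fkB (Fin (d+1)) k) (Prel (Fin (d+1)) n) (QrelB n) := by
  intro p hp heq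
  simp only [Prel, Set.mem_setOf_eq] at hp
  choose I hI1 hI2 using hp
  have h01 : (0 : Fin (d+1)) ≠ 1 := by
    intro h
    have := congrArg Fin.val h
    simp [Fin.val_one', Nat.mod_eq_of_lt (by omega : 1 < d+1)] at this
  have hcol : ∀ i : Fin n, ∃ j₀ : Fin k, p j₀ i = 1 ∧ ∀ j, j ≠ j₀ → p j i = 0 := by
    intro i
    have := congrFun heq i
    simpa [fkB] using this
  have hbij : Function.Bijective I := by
    constructor
    · intro j1 j2 h
      obtain ⟨j0, hj0, hj0u⟩ := hcol (I j1)
      have e1 : j1 = j0 := by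
        by_contra hne
        exact h01 ((hj0u j1 hne ▸ hI1 j1).symm ▸ rfl)
      have e2 : j2 = j0 := by
        by_contra hne
        have h2 : p j2 (I j1) = 1 := by rw [h]; exact hI1 j2
        exact h01 ((hj0u j2 hne) ▸ h2)
      rw [e1, e2]
    · intro i
      obtain ⟨j0, hj0, _⟩ := hcol i
      refine ⟨j0, ?_⟩
      by_contra hne
      have := hI2 j0 i (fun h => hne h.symm)
      rw [this] at hj0
      exact h01 hj0
  have := Fintype.card_of_bijective hbij
  simp at this
  exact hkn this

/-- Every function in the minor-closure of `F_U` preserves `(P_n, Q_n)` for all `n ∉ U`. -/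
theorem minorClosure_FU_preserves (d : ℕ) (hd : 1 ≤ d) (U : Set ℕ)
    (n : ℕ) (hn : n ∉ U) (k : ℕ) (f : (Fin k → Fin (d+1)) → Bool)
    (hf : f ∈ MinorClosure (FUfam (Fin (d+1)) U) k) :
    Preserves f (Prel (Fin (d+1)) n) (QrelB n) := by
  apply hf (fun m => {g | Preserves g (Prel (Fin (d+1)) n) (QrelB n)})
  · intro a b σ g hg p hp
    exact hg (fun j => p (σ j)) (fun j => hp (σ j))
  · rintro m g ⟨hm, rfl⟩
    exact fkB_preserves hd (fun h => hn (h ▸ hm))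
end

section
/- Let U ⊆ ℕ \ {1}. In the clonoid with target algebra B = ({0,1}, ¬, 0) generated by F_U, the only members of F_ℕ are the elements of F_U; that is, ⟨F_U⟩_B ∩ F_ℕ = F_U. -/
/-- A clonoid with source `A` and target algebra `B = ({0,1}, ¬, 𝟎)`:
closed under minors, pointwise negation, and the unary constant `𝟎`. -/
def IsClonoidNeg (A : Type*) (C : (n : ℕ) → Set ((Fin n → A) → Bool)) : Prop :=
  (∀ k l (σ : Fin k → Fin l) f, f ∈ C k → Minor f σ ∈ C l) ∧
  (∀ k f, f ∈ C k → (fun x => !(f x)) ∈ C k) ∧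
  (∀ k (f : (Fin k → A) → Bool), f ∈ C k → (fun _ => false) ∈ C k)

/-- The clonoid with target `({0,1}, ¬, 𝟎)` generated by the family `F`. -/
def GenNeg {A : Type*} (F : (n : ℕ) → Set ((Fin n → A) → Bool)) (k : ℕ) :
    Set ((Fin k → A) → Bool) :=
  {f | ∀ C : (n : ℕ) → Set ((Fin n → A) → Bool),
      IsClonoidNeg A C → (∀ n, F n ⊆ C n) → f ∈ C k}


lemma fkB_zero_eval (A : Type*) [Zero A] [One A] [DecidableEq A] (h01 : (0:A) ≠ 1) (k : ℕ) :
    fkB A k (fun _ => 0) = false := by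
  simp only [fkB, decide_eq_false_iff_not]
  rintro ⟨i, h1, -⟩
  exact h01 h1

lemma fkB_unit_eval (A : Type*) [Zero A] [One A] [DecidableEq A] (n : ℕ) (i : Fin n) :
    fkB A n (fun j => if j = i then 1 else 0) = true := by
  simp only [fkB, decide_eq_true_eq]
  exact ⟨i, if_pos rfl, fun j hj => if_neg hj⟩

lemma minor_eq_fk {A : Type*} [Zero A] [One A] [DecidableEq A] (h01 : (0:A) ≠ 1)
    {n k : ℕ} (σ : Fin k → Fin n)
    (h : fkB A n = Minor (fkB A k) σ) : k = n := by
  have hbij : Function.Bijective σ := by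
    rw [Function.bijective_iff_existsUnique]
    intro i
    have hi := congrFun h (fun j => if j = i then (1:A) else 0)
    rw [fkB_unit_eval] at hi
    have hi' : ∃ j₀, (if σ j₀ = i then (1:A) else 0) = 1 ∧
        ∀ j, j ≠ j₀ → (if σ j = i then (1:A) else 0) = 0 := by
      have := hi.symm
      simpa only [Minor, fkB, decide_eq_true_eq] using this
    obtain ⟨j₀, h1, h2⟩ := hi'
    refine ⟨j₀, ?_, ?_⟩
    · by_contra hne
      rw [if_neg hne] at h1
      exact h01 h1
    · intro j hj
      by_contra hne
      have := h2 j hne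
      rw [if_pos hj] at this
      exact h01 this.symm
  have := Fintype.card_of_bijective hbij
  simpa using this

/-- For `U ⊆ ℕ \ {1}`, the only members of `F_ℕ` in the clonoid
`⟨F_U⟩_B` with `B = ({0,1}, ¬, 𝟎)` are the elements of `F_U`:
`⟨F_U⟩_B ∩ F_ℕ = F_U`. -/
theorem genNeg_FU_inter_FN (d : ℕ) (hd : 1 ≤ d) (U : Set ℕ)
    (hU : ∀ m ∈ U, 2 ≤ m) (n : ℕ) (hn : 1 ≤ n) :
    fkB (Fin (d+1)) n ∈ GenNeg (FUfam (Fin (d+1)) U) n ↔ n ∈ U := by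
  have h01 : (0 : Fin (d+1)) ≠ 1 := by
    intro h
    have h1 : (1 : Fin (d+1)).val = 1 % (d+1) := rfl
    have h2 := congrArg Fin.val h
    have h3 : 1 % (d+1) = 1 := Nat.mod_eq_of_lt (by omega)
    simp [h1, h3] at h2
  constructor
  · intro hmem
    set C : (m : ℕ) → Set ((Fin m → Fin (d+1)) → Bool) :=
      fun m => {g | g = (fun _ => false) ∨ g = (fun _ => true) ∨
        (∃ k, k ∈ U ∧ ∃ σ : Fin k → Fin m, g = Minor (fkB (Fin (d+1)) k) σ) ∨
        (∃ k, k ∈ U ∧ ∃ σ : Fin k → Fin m,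
          g = fun x => !(Minor (fkB (Fin (d+1)) k) σ x))} with hCdef
    have hclon : IsClonoidNeg (Fin (d+1)) C := by
      refine ⟨?_, ?_, ?_⟩
      · rintro k l σ f (rfl | rfl | ⟨m, hm, τ, rfl⟩ | ⟨m, hm, τ, rfl⟩)
        · exact Or.inl rfl
        · exact Or.inr (Or.inl rfl)
        · exact Or.inr (Or.inr (Or.inl ⟨m, hm, σ ∘ τ, rfl⟩))
        · exact Or.inr (Or.inr (Or.inr ⟨m, hm, σ ∘ τ, rfl⟩))
      · rintro k f (rfl | rfl | ⟨m, hm, τ, rfl⟩ | ⟨m, hm, τ, rfl⟩)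
        · exact Or.inr (Or.inl (by funext x; simp))
        · exact Or.inl (by funext x; simp)
        · exact Or.inr (Or.inr (Or.inr ⟨m, hm, τ, rfl⟩))
        · exact Or.inr (Or.inr (Or.inl ⟨m, hm, τ, by funext x; simp⟩))
      · intro k f _
        exact Or.inl rfl
    have hsub : ∀ m, FUfam (Fin (d+1)) U m ⊆ C m := by
      rintro m g ⟨hm, rfl⟩
      exact Or.inr (Or.inr (Or.inl ⟨m, hm, id, rfl⟩))
    have hC := hmem C hclon hsub
    have hi0 : (⟨0, hn⟩ : Fin n) = ⟨0, hn⟩ := rfl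
    rcases hC with h | h | ⟨k, hk, σ, h⟩ | ⟨k, hk, σ, h⟩
    · exfalso
      have := congrFun h (fun j => if j = (⟨0, hn⟩ : Fin n) then (1 : Fin (d+1)) else 0)
      rw [fkB_unit_eval] at this
      simp at this
    · exfalso
      have := congrFun h (fun _ => (0 : Fin (d+1)))
      rw [fkB_zero_eval _ h01] at this
      simp at this
    · have := minor_eq_fk h01 σ h
      exact this ▸ hk
    · exfalso
      have := congrFun h (fun _ => (0 : Fin (d+1)))
      rw [fkB_zero_eval _ h01] at this
      have h2 : Minor (fkB (Fin (d+1)) k) σ (fun _ => (0 : Fin (d+1))) =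
          fkB (Fin (d+1)) k (fun _ => 0) := rfl
      rw [h2, fkB_zero_eval _ h01] at this
      simp at this
  · intro hnU
    intro C hclon hsub
    exact hsub n ⟨hnU, rfl⟩
end

section
/- Let A ⊇ {0,1}. For distinct subsets U, V ⊆ ℕ, the clonoids with target algebra B = ({0,1}, ↛) generated by F_U and F_V are distinct: ⟨F_U⟩_B ≠ ⟨F_V⟩_B. Consequently, there are continuum many clonoids with source A and target ({0,1}, ↛). -/
/-- A clonoid with source `A` and target algebra `B = ({0,1}, ↛)` where
`x ↛ y := x ∧ ¬y`: closed under minors and pointwise `↛`. -/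
def IsClonoidNimp (A : Type*) (C : (n : ℕ) → Set ((Fin n → A) → Bool)) : Prop :=
  (∀ k l (σ : Fin k → Fin l) f, f ∈ C k → Minor f σ ∈ C l) ∧
  (∀ k f g, f ∈ C k → g ∈ C k → (fun x => f x && !(g x)) ∈ C k)

/-- The clonoid with target `({0,1}, ↛)` generated by the family `F`. -/
def GenNimp {A : Type*} (F : (n : ℕ) → Set ((Fin n → A) → Bool)) :
    (k : ℕ) → Set ((Fin k → A) → Bool) :=
  fun k => {f | ∀ C : (n : ℕ) → Set ((Fin n → A) → Bool),
      IsClonoidNimp A C → (∀ n, F n ⊆ C n) → f ∈ C k}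

section Aux

variable {A : Type*} [Zero A] [One A] [DecidableEq A]

def PresC (A : Type*) [Zero A] [One A] (n : ℕ) :
    (k : ℕ) → Set ((Fin k → A) → Bool) :=
  fun _k => {f | Preserves f (Prel A n) (QrelB n)}

lemma isClonoid_presC (A : Type*) [Zero A] [One A] (n : ℕ) :
    IsClonoidNimp A (PresC A n) := by
  constructor
  · intro k l σ f hf p hp
    exact hf (fun j => p (σ j)) (fun j => hp (σ j))
  · intro k f g hf hg p hp
    have h1 := hf p hp
    simp only [QrelB, Set.mem_setOf_eq] at h1 ⊢
    intro heq
    apply h1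
    funext i
    have := congrFun heq i
    simp only [Bool.and_eq_true, Bool.not_eq_true'] at this
    simp [this.1]

lemma fkB_preserves_s13 (h10 : (1 : A) ≠ 0) {k n : ℕ} (hkn : k ≠ n) :
    fkB A k ∈ PresC A n k := by
  intro p hp
  simp only [Prel, Set.mem_setOf_eq] at hp
  simp only [QrelB, Set.mem_setOf_eq]
  intro heq
  apply hkn
  have hcol : ∀ i : Fin n, ∃ j, p j i = 1 ∧ ∀ j', j' ≠ j → p j' i = 0 := by
    intro i
    have := congrFun heq i
    simpa [fkB] using this
  choose φ hφ1 hφ2 using hp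
  choose ψ hψ1 hψ2 using hcol
  have left : ∀ j, ψ (φ j) = j := by
    intro j
    by_contra hne
    have h0 := hψ2 (φ j) j (Ne.symm hne)
    rw [hφ1 j] at h0
    exact h10 h0
  have right : ∀ i, φ (ψ i) = i := by
    intro i
    by_contra hne
    have h0 := hφ2 (ψ i) i (Ne.symm hne)
    rw [hψ1 i] at h0
    exact h10 h0
  exact Fin.equiv_iff_eq.mp ⟨⟨φ, ψ, left, right⟩⟩

lemma fkB_not_mem (h10 : (1 : A) ≠ 0) (n : ℕ) : fkB A n ∉ PresC A n n := by
  intro h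
  have hrows : ∀ j : Fin n, (fun i => if i = j then (1:A) else 0) ∈ Prel A n := by
    intro j
    exact ⟨j, by simp, fun i hi => by simp [hi]⟩
  have := h (fun j i => if i = j then 1 else 0) hrows
  simp only [QrelB, Set.mem_setOf_eq] at this
  apply this
  funext i
  simp only [fkB, decide_eq_true_eq]
  exact ⟨i, by simp, fun j hj => by simp [Ne.symm hj]⟩

lemma gen_ne (h10 : (1 : A) ≠ 0) {U V : Set ℕ} {n : ℕ} (hnU : n ∈ U) (hnV : n ∉ V) :
    GenNimp (FUfam A U) ≠ GenNimp (FUfam A V) := by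
  intro heq
  have hmem : fkB A n ∈ GenNimp (FUfam A U) n := fun C _hC hFC => hFC n ⟨hnU, rfl⟩
  rw [heq] at hmem
  have hsub : ∀ m, FUfam A V m ⊆ PresC A n m := by
    rintro m g ⟨hmV, rfl⟩
    exact fkB_preserves_s13 h10 (fun h => hnV (h ▸ hmV))
  exact fkB_not_mem h10 n (hmem (PresC A n) (isClonoid_presC A n) hsub)

lemma gen_isClonoid {A : Type*} (F : (n : ℕ) → Set ((Fin n → A) → Bool)) :
    IsClonoidNimp A (GenNimp F) := by
  constructor
  · intro k l σ f hf C hC hFC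
    exact hC.1 k l σ f (hf C hC hFC)
  · intro k f g hf hg C hC hFC
    exact hC.2 k f g (hf C hC hFC) (hg C hC hFC)

end Aux

/-- Distinct subsets `U, V ⊆ ℕ` yield distinct clonoids `⟨F_U⟩_B ≠ ⟨F_V⟩_B`
with target `B = ({0,1}, ↛)`; consequently there are continuum many clonoids
with source `A` and target `({0,1}, ↛)`. -/
theorem genNimp_distinct_and_continuum (d : ℕ) (hd : 1 ≤ d) :
    (∀ U V : Set ℕ, (∀ m ∈ U, 1 ≤ m) → (∀ m ∈ V, 1 ≤ m) → U ≠ V →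
      GenNimp (FUfam (Fin (d+1)) U) ≠ GenNimp (FUfam (Fin (d+1)) V)) ∧
    Cardinal.mk {C : (n : ℕ) → Set ((Fin n → Fin (d+1)) → Bool) //
      IsClonoidNimp (Fin (d+1)) C} = Cardinal.continuum := by
  have h10 : (1 : Fin (d+1)) ≠ 0 := by
    intro h
    have := congrArg Fin.val h
    simp [Fin.val_one'] at this
    omega
  have hdist : ∀ U V : Set ℕ, U ≠ V →
      GenNimp (FUfam (Fin (d+1)) U) ≠ GenNimp (FUfam (Fin (d+1)) V) := by
    intro U V hUV
    have : ∃ n, (n ∈ U ∧ n ∉ V) ∨ (n ∈ V ∧ n ∉ U) := by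
      by_contra hc
      push_neg at hc
      exact hUV (Set.ext fun n => ⟨(hc n).1, (hc n).2⟩)
    obtain ⟨n, hn⟩ := this
    rcases hn with ⟨h1, h2⟩ | ⟨h1, h2⟩
    · exact gen_ne h10 h1 h2
    · exact (gen_ne h10 h1 h2).symm
  refine ⟨fun U V _ _ hUV => hdist U V hUV, le_antisymm ?_ ?_⟩
  · calc Cardinal.mk {C : (n : ℕ) → Set ((Fin n → Fin (d+1)) → Bool) //
          IsClonoidNimp (Fin (d+1)) C}
        ≤ Cardinal.mk ((n : ℕ) → Set ((Fin n → Fin (d+1)) → Bool)) :=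
          Cardinal.mk_subtype_le _
      _ ≤ Cardinal.continuum := by
          rw [Cardinal.mk_pi]
          calc Cardinal.prod (fun n => Cardinal.mk (Set ((Fin n → Fin (d+1)) → Bool)))
              ≤ Cardinal.prod (fun _ : ℕ => Cardinal.continuum) := by
                apply Cardinal.prod_le_prod
                intro n
                have : Cardinal.mk (((Fin n → Fin (d+1)) → Bool)) ≤ Cardinal.aleph0 :=
                  Cardinal.mk_le_aleph0
                calc Cardinal.mk (Set ((Fin n → Fin (d+1)) → Bool))
                    = 2 ^ Cardinal.mk ((Fin n → Fin (d+1)) → Bool) := Cardinal.mk_set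
                  _ ≤ 2 ^ Cardinal.aleph0 := by
                      exact Cardinal.power_le_power_left (by norm_num) this
                  _ = Cardinal.continuum := Cardinal.two_power_aleph0
            _ = Cardinal.continuum ^ Cardinal.aleph0 := by
                rw [Cardinal.prod_const, Cardinal.mk_nat]
                simp
            _ = Cardinal.continuum := by
                rw [← Cardinal.two_power_aleph0, ← Cardinal.power_mul,
                  Cardinal.aleph0_mul_aleph0]
  · have ginj : Function.Injective (fun S : Set ℕ =>
        (⟨GenNimp (FUfam (Fin (d+1)) (Nat.succ '' S)),
          gen_isClonoid _⟩ : {C : (n : ℕ) → Set ((Fin n → Fin (d+1)) → Bool) //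
            IsClonoidNimp (Fin (d+1)) C})) := by
      intro S₁ S₂ h
      by_contra hne
      have himg : Nat.succ '' S₁ ≠ Nat.succ '' S₂ := by
        intro he
        exact hne (Set.image_injective.mpr Nat.succ_injective he)
      exact hdist _ _ himg (congrArg Subtype.val h)
    calc Cardinal.continuum = Cardinal.mk (Set ℕ) := by
          rw [Cardinal.mk_set, Cardinal.mk_nat, Cardinal.two_power_aleph0]
      _ ≤ _ := Cardinal.mk_le_of_injective ginj
end

section
/- Let B₁ = ({0,1}, t, s) with t(x,y) = x and s(x,y,z) = x + y + z (mod 2), and B₂ = ({0,1}, t, s) with t(x,y) = y and s the majority operation. Then the product algebra B₁ × B₂ has a 3-cube term but neither an NU-term nor a Mal'cev term. -/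
/-- The universe of `B₁ × B₂`, with `B₁ = B₂ = {0,1}` rendered as `Bool`. -/
abbrev DD := Bool × Bool

/-- The binary operation `t`: first projection in `B₁`, second projection in `B₂`. -/
def tOp : (Fin 2 → DD) → DD := fun x => ((x 0).1, (x 1).2)

/-- Boolean majority. -/
def maj (a b c : Bool) : Bool := (a && b) || (a && c) || (b && c)

/-- The ternary operation `s`: `x + y + z (mod 2)` in `B₁`, majority in `B₂`. -/
def sOp : (Fin 3 → DD) → DD :=
  fun x => (xor (xor (x 0).1 (x 1).1) (x 2).1, maj (x 0).2 (x 1).2 (x 2).2)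

/-- The clone of term operations of `B₁ × B₂`, i.e. the clone generated by `t` and `s`. -/
def TermClone : (n : ℕ) → Set ((Fin n → DD) → DD) :=
  fun n => {φ | ∀ Cl : (m : ℕ) → Set ((Fin m → DD) → DD),
      IsCloneOn DD Cl → tOp ∈ Cl 2 → sOp ∈ Cl 3 → φ ∈ Cl n}

/-! ### Auxiliary invariants -/

/-- Operations whose first component preserves the 4-ary "affine" relation on `Bool`. -/
def ClA : (n : ℕ) → Set ((Fin n → DD) → DD) :=
  fun n => {φ | ∀ x y z w : Fin n → DD,
    (∀ i, xor (xor (x i).1 (y i).1) (xor (z i).1 (w i).1) = false) →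
    xor (xor (φ x).1 (φ y).1) (xor (φ z).1 (φ w).1) = false}

/-- Operations whose second component is monotone. -/
def ClM : (n : ℕ) → Set ((Fin n → DD) → DD) :=
  fun n => {φ | ∀ x y : Fin n → DD,
    (∀ i, (x i).2 = true → (y i).2 = true) → ((φ x).2 = true → (φ y).2 = true)}

lemma clA_clone : IsCloneOn DD ClA := by
  constructor
  · intro n i x y z w h; exact h i
  · intro m k φ g hφ hg x y z w h
    exact hφ _ _ _ _ (fun j => hg j x y z w h)

lemma clM_clone : IsCloneOn DD ClM := by
  constructor
  · intro n i x y h; exact h i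
  · intro m k φ g hφ hg x y h
    exact hφ _ _ (fun j => hg j x y h)

lemma tOp_clA : tOp ∈ ClA 2 := fun _ _ _ _ h => h 0

lemma tOp_clM : tOp ∈ ClM 2 := fun _ _ h => h 1

lemma xor3_lemma : ∀ a0 a1 a2 b0 b1 b2 c0 c1 c2 d0 d1 d2 : Bool,
    xor (xor a0 b0) (xor c0 d0) = false → xor (xor a1 b1) (xor c1 d1) = false →
    xor (xor a2 b2) (xor c2 d2) = false →
    xor (xor (xor (xor a0 a1) a2) (xor (xor b0 b1) b2))
      (xor (xor (xor c0 c1) c2) (xor (xor d0 d1) d2)) = false := by decide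

lemma maj_mono : ∀ a0 a1 a2 b0 b1 b2 : Bool,
    (a0 = true → b0 = true) → (a1 = true → b1 = true) → (a2 = true → b2 = true) →
    maj a0 a1 a2 = true → maj b0 b1 b2 = true := by decide

lemma sOp_clA : sOp ∈ ClA 3 :=
  fun x y z w h => xor3_lemma _ _ _ _ _ _ _ _ _ _ _ _ (h 0) (h 1) (h 2)

lemma sOp_clM : sOp ∈ ClM 3 :=
  fun x y h => maj_mono _ _ _ _ _ _ (h 0) (h 1) (h 2)

/-! ### The cube term -/

def p7 (j : Fin 7) : (Fin 7 → DD) → DD := fun x => x j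

def cA : (Fin 7 → DD) → DD := fun x => sOp (fun l => ![p7 0, p7 1, p7 2] l x)

def cB : (Fin 7 → DD) → DD := fun x => sOp (fun l => ![p7 0, p7 1, p7 3] l x)

def cube : (Fin 7 → DD) → DD := fun x => tOp (fun l => ![cA, cB] l x)

def cubeCol : Fin 7 → (Fin 3 → Bool) := fun j i => (j.1 + 1).testBit i.1

lemma cube_mem : cube ∈ TermClone 7 := by
  intro Cl hCl ht hs
  have hA : cA ∈ Cl 7 :=
    hCl.2 3 7 sOp ![p7 0, p7 1, p7 2] hs (by
      intro j; fin_cases j <;> exact hCl.1 7 _)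
  have hB : cB ∈ Cl 7 :=
    hCl.2 3 7 sOp ![p7 0, p7 1, p7 3] hs (by
      intro j; fin_cases j <;> exact hCl.1 7 _)
  exact hCl.2 2 7 tOp ![cA, cB] ht (by
    intro j; fin_cases j
    · exact hA
    · exact hB)

/-- `B₁ × B₂` has a 3-cube term (a 7-ary term acting as required on the rows of
the 3×7 matrix whose columns are all tuples in `{x,y}³` except `(x,x,x)`;
columns are encoded by Boolean triples, `true` meaning `y`), but has neither a
near-unanimity term nor a Mal'cev term. -/
theorem prod_cube_no_NU_no_malcev :
    (∃ c ∈ TermClone 7, ∃ col : Fin 7 → (Fin 3 → Bool),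
      (∀ s : Fin 3 → Bool, s ≠ (fun _ => false) → ∃ j, col j = s) ∧
      (∀ j, col j ≠ (fun _ => false)) ∧
      (∀ x y : DD, ∀ i : Fin 3, c (fun j => if col j i then y else x) = x)) ∧
    ¬ (∃ n, 3 ≤ n ∧ ∃ φ ∈ TermClone n, ∀ x y : DD, ∀ i : Fin n,
        φ (Function.update (fun _ => x) i y) = x) ∧
    ¬ (∃ p ∈ TermClone 3, ∀ x y : DD, p ![y, y, x] = x ∧ p ![x, y, y] = x) := by
  refine ⟨⟨cube, cube_mem, cubeCol, by decide, by decide, by decide⟩, ?_, ?_⟩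
  · rintro ⟨n, hn, φ, hφ, hNU⟩
    have hA := hφ ClA clA_clone tOp_clA sOp_clA
    have i0 : Fin n := ⟨0, by omega⟩
    have hconst : ∀ x : DD, φ (fun _ => x) = x := by
      intro x
      have h := hNU x x i0
      have he : Function.update (fun _ : Fin n => x) i0 x = fun _ => x := by
        funext k; by_cases hk : k = i0 <;> simp [Function.update, hk]
      rwa [he] at h
    have hej : ∀ j : Fin n, φ (fun i => ((decide (i = j) : Bool), false)) = (false, false) := by
      intro j
      have he : (fun i : Fin n => ((decide (i = j) : Bool), (false : Bool)))
          = Function.update (fun _ : Fin n => ((false : Bool), (false : Bool))) j (true, false) := by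
        funext k; by_cases hk : k = j <;> simp [Function.update, hk]
      rw [he]; exact hNU (false, false) (true, false) j
    have key : ∀ S : Finset (Fin n),
        (φ (fun i => ((decide (i ∈ S) : Bool), false))).1 = false := by
      intro S
      induction S using Finset.induction_on with
      | empty =>
        have he : (fun i : Fin n => ((decide (i ∈ (∅ : Finset (Fin n))) : Bool), (false:Bool)))
            = fun _ => (false, false) := by funext k; simp
        rw [he, hconst]
      | @insert j S hj IH =>
        have h4 := hA (fun i => ((decide (i ∈ insert j S) : Bool), false))
          (fun i => ((decide (i ∈ S) : Bool), false))
          (fun i => ((decide (i = j) : Bool), false))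
          (fun _ => ((false : Bool), (false : Bool)))
          (by
            intro i
            by_cases hij : i = j
            · subst hij; simp [Finset.mem_insert, hj]
            · by_cases his : i ∈ S <;> simp [Finset.mem_insert, hij, his])
        rw [IH, hej j, hconst] at h4
        simpa using h4
    have h1 := key Finset.univ
    have he : (fun i : Fin n => ((decide (i ∈ (Finset.univ : Finset (Fin n))) : Bool), (false:Bool)))
        = fun _ => (true, false) := by funext k; simp
    rw [he, hconst] at h1
    simp at h1
  · rintro ⟨p, hp, hid⟩
    have hM := hp ClM clM_clone tOp_clM sOp_clM
    have h1 := (hid ((false : Bool), true) ((false : Bool), false)).1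
    have h2 := (hid ((false : Bool), false) ((false : Bool), true)).2
    have hmono := hM ![((false:Bool), (false:Bool)), (false, false), (false, true)]
      ![((false:Bool), (false:Bool)), (false, true), (false, true)] (by decide)
    rw [h1, h2] at hmono
    simp at hmono
end
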